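/- Let H be a Hilbert space, φ a bounded finite potent endomorphism with AST-decomposition H = W_φ ⊕ U_φ, and let H = W_{φ*} ⊕ U_{φ*} be the AST-decomposition of the adjoint φ*. Then U_{φ*} = W_φ^⊥ and W_{φ*} = U_φ^⊥; in particular dim W_{φ*} = dim W_φ and H = W_φ^⊥ ⊕ U_φ^⊥. -/

import Mathlib

open ContinuousLinearMap

/-- For the AST-decomposition, large powers have range `W` and kernel `U`. -/
private theorem ast_pow_range_ker {H : Type*} [NormedAddCommGroup H]
    [InnerProductSpace ℂ H] (ψ : H →ₗ[ℂ] H)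
    (W U : Submodule ℂ H) (hWU : IsCompl W U)
    (hW : ∀ x ∈ W, ψ x ∈ W) (hU : ∀ x ∈ U, ψ x ∈ U)
    (hWa : Function.Bijective (ψ.restrict hW))
    (n : ℕ) (hn : (ψ.restrict hU) ^ n = 0) :
    LinearMap.range (ψ ^ n) = W ∧ LinearMap.ker (ψ ^ n) = U := by
  have hWn : ∀ x ∈ W, (ψ ^ n) x ∈ W :=
    fun x hx => Module.End.pow_apply_mem_of_forall_mem n hW x hx
  have hU0 : ∀ u ∈ U, (ψ ^ n) u = 0 := by
    intro u hu
    have h := (Module.End.pow_restrict n hU).symm.trans hn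
    have := congrArg Subtype.val (LinearMap.ext_iff.mp h ⟨u, hu⟩)
    simpa using this
  have hbij : Function.Bijective ((ψ ^ n).restrict hWn) := by
    rw [← Module.End.pow_restrict n hW, Module.End.coe_pow]
    exact hWa.iterate n
  have hdecomp : ∀ x : H, ∃ w ∈ W, ∃ u ∈ U, x = w + u := by
    intro x
    have hx : x ∈ W ⊔ U := by rw [hWU.sup_eq_top]; trivial
    obtain ⟨w, hw, u, hu, h⟩ := Submodule.mem_sup.mp hx
    exact ⟨w, hw, u, hu, h.symm⟩
  constructor
  · apply le_antisymm
    · rintro _ ⟨x, rfl⟩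
      obtain ⟨w, hw, u, hu, rfl⟩ := hdecomp x
      rw [map_add, hU0 u hu, add_zero]
      exact hWn w hw
    · intro w hw
      obtain ⟨⟨x, hxW⟩, hx⟩ := hbij.surjective ⟨w, hw⟩
      have := congrArg Subtype.val hx
      exact ⟨x, this⟩
  · apply le_antisymm
    · intro x hx
      obtain ⟨w, hw, u, hu, rfl⟩ := hdecomp x
      have hx0 : (ψ ^ n) (w + u) = 0 := hx
      have hw0 : (ψ ^ n) w = 0 := by
        rwa [map_add, hU0 u hu, add_zero] at hx0
      have : ((ψ ^ n).restrict hWn) ⟨w, hw⟩ = ((ψ ^ n).restrict hWn) 0 := by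
        rw [map_zero]
        exact Subtype.ext hw0
      have hwz : w = 0 := by simpa using congrArg Subtype.val (hbij.injective this)
      rw [hwz, zero_add]
      exact hu
    · intro u hu
      exact hU0 u hu

private theorem ker_adjoint_clm {H : Type*} [NormedAddCommGroup H]
    [InnerProductSpace ℂ H] [CompleteSpace H] (T : H →L[ℂ] H) :
    LinearMap.ker (ContinuousLinearMap.adjoint T).toLinearMap
      = (LinearMap.range T.toLinearMap)ᗮ := by
  ext v
  simp only [LinearMap.mem_ker, Submodule.mem_orthogonal, ContinuousLinearMap.coe_coe]
  constructor
  · rintro hv _ ⟨x, rfl⟩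
    show (inner ℂ (T x) v : ℂ) = 0
    rw [← ContinuousLinearMap.adjoint_inner_right, hv, inner_zero_right]
  · intro hv
    have h0 : (inner ℂ ((ContinuousLinearMap.adjoint T) v)
        ((ContinuousLinearMap.adjoint T) v) : ℂ) = 0 := by
      rw [ContinuousLinearMap.adjoint_inner_right]
      exact hv _ ⟨_, rfl⟩
    exact inner_self_eq_zero.mp h0

/-- Main auxiliary step: `U' = Wᗮ`. -/
private theorem ast_adjoint_aux {H : Type*} [NormedAddCommGroup H]
    [InnerProductSpace ℂ H] [CompleteSpace H]
    (φ : H →L[ℂ] H)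
    (W U : Submodule ℂ H) (hWU : IsCompl W U)
    (hW : ∀ x ∈ W, φ.toLinearMap x ∈ W) (hU : ∀ x ∈ U, φ.toLinearMap x ∈ U)
    (hWa : Function.Bijective (φ.toLinearMap.restrict hW))
    (hUn : IsNilpotent (φ.toLinearMap.restrict hU))
    (χ : H →L[ℂ] H) (hχ : χ = ContinuousLinearMap.adjoint φ)
    (W' U' : Submodule ℂ H) (hWU' : IsCompl W' U')
    (hW' : ∀ x ∈ W', χ.toLinearMap x ∈ W')
    (hU' : ∀ x ∈ U', χ.toLinearMap x ∈ U')
    (hWa' : Function.Bijective (χ.toLinearMap.restrict hW'))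
    (hUn' : IsNilpotent (χ.toLinearMap.restrict hU')) :
    U' = Wᗮ := by
  obtain ⟨n1, hn1⟩ := hUn
  obtain ⟨n2, hn2⟩ := hUn'
  set n := n1 + n2 with hn
  have h1 : (φ.toLinearMap.restrict hU) ^ n = 0 := by
    rw [hn, pow_add, hn1, zero_mul]
  have h2 : (χ.toLinearMap.restrict hU') ^ n = 0 := by
    rw [hn, add_comm n1 n2, pow_add, hn2, zero_mul]
  obtain ⟨hrange, -⟩ := ast_pow_range_ker φ.toLinearMap W U hWU hW hU hWa n h1
  obtain ⟨-, hker'⟩ := ast_pow_range_ker χ.toLinearMap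
    W' U' hWU' hW' hU' hWa' n h2
  have hpow : χ.toLinearMap ^ n
      = (ContinuousLinearMap.adjoint (φ ^ n)).toLinearMap := by
    have : ContinuousLinearMap.adjoint (φ ^ n) = χ ^ n := by
      rw [hχ, ← ContinuousLinearMap.star_eq_adjoint, ← ContinuousLinearMap.star_eq_adjoint,
        star_pow]
    rw [this]
    ext x
    simp [Module.End.pow_apply, ContinuousLinearMap.coe_pow, Function.iterate_succ]
  have hpowφ : (φ ^ n).toLinearMap = φ.toLinearMap ^ n := by
    ext x
    simp [Module.End.pow_apply, ContinuousLinearMap.coe_pow]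
  rw [← hker', hpow, ker_adjoint_clm, hpowφ, hrange]

theorem adjoint_AST_decomposition {H : Type*} [NormedAddCommGroup H]
    [InnerProductSpace ℂ H] [CompleteSpace H]
    (φ : H →L[ℂ] H)
    (W U : Submodule ℂ H) (hWU : IsCompl W U) [FiniteDimensional ℂ W]
    (hW : ∀ x ∈ W, φ.toLinearMap x ∈ W) (hU : ∀ x ∈ U, φ.toLinearMap x ∈ U)
    (hWa : Function.Bijective (φ.toLinearMap.restrict hW))
    (hUn : IsNilpotent (φ.toLinearMap.restrict hU))
    (W' U' : Submodule ℂ H) (hWU' : IsCompl W' U') [FiniteDimensional ℂ W']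
    (hW' : ∀ x ∈ W', (ContinuousLinearMap.adjoint φ).toLinearMap x ∈ W')
    (hU' : ∀ x ∈ U', (ContinuousLinearMap.adjoint φ).toLinearMap x ∈ U')
    (hWa' : Function.Bijective ((ContinuousLinearMap.adjoint φ).toLinearMap.restrict hW'))
    (hUn' : IsNilpotent ((ContinuousLinearMap.adjoint φ).toLinearMap.restrict hU')) :
    U' = Wᗮ ∧ W' = Uᗮ ∧ Module.finrank ℂ W' = Module.finrank ℂ W ∧
    IsCompl Wᗮ Uᗮ := by
  have h1 : U' = Wᗮ := ast_adjoint_aux φ W U hWU hW hU hWa hUn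
    (ContinuousLinearMap.adjoint φ) rfl W' U' hWU' hW' hU' hWa' hUn'
  have h2 : U = W'ᗮ := ast_adjoint_aux (ContinuousLinearMap.adjoint φ) W' U' hWU'
    hW' hU' hWa' hUn' φ (ContinuousLinearMap.adjoint_adjoint φ).symm
    W U hWU hW hU hWa hUn
  have h3 : W' = Uᗮ := by
    rw [h2, Submodule.orthogonal_orthogonal]
  have hUclosed : IsClosed (U : Set H) := by
    rw [h2]; exact Submodule.isClosed_orthogonal _
  haveI : CompleteSpace U := hUclosed.completeSpace_coe
  have hcompl : IsCompl U Uᗮ := Submodule.isCompl_orthogonal_of_hasOrthogonalProjection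
  have e1 : (H ⧸ U) ≃ₗ[ℂ] W := Submodule.quotientEquivOfIsCompl U W hWU.symm
  have e2 : (H ⧸ U) ≃ₗ[ℂ] Uᗮ := Submodule.quotientEquivOfIsCompl U Uᗮ hcompl
  have hfr : Module.finrank ℂ W' = Module.finrank ℂ W := by
    rw [h3]
    exact (e2.symm.trans e1).finrank_eq
  refine ⟨h1, h3, hfr, ?_⟩
  rw [← h1, ← h3]
  exact hWU'.symm
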